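/- Let p be a prime with p ≡ 1 (mod 4), t, b positive integers with t² + 4 = b²p, and 𝓕 the associated Lucas sequence. Then the period of the sequence 𝓕 modulo p² divides p²(p − 1); that is, for all integers m and n with m ≡ n (mod p²(p − 1)), one has 𝓕_m ≡ 𝓕_n (mod p²). -/

import Mathlib

private lemma choose3_second_diff (m : ℕ) :
    (m+3).choose 3 + (m+1).choose 3 = 2*((m+2).choose 3) + (m+1) := by
  simp [Nat.choose_succ_succ]; ring

private lemma six_choose3 (n : ℕ) : 6 * n.choose 3 = (n-2) * ((n-1) * n) := by
  rw [show (n-2) * ((n-1) * n) = n.descFactorial 3 by simp [Nat.descFactorial],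
    Nat.descFactorial_eq_factorial_mul_choose]
  norm_num [Nat.factorial]

theorem stmt_6 (p : ℕ) (hp : p.Prime) (hp4 : p % 4 = 1)
    (t b : ℤ) (ht : 0 < t) (hb : 0 < b)
    (hpt : t ^ 2 + 4 = b ^ 2 * (p : ℤ))
    (F : ℤ → ℤ) (hF0 : F 0 = 0) (hF1 : F 1 = 1)
    (hF : ∀ k : ℤ, F (k + 2) = t * F (k + 1) + F k) :
    ∀ m n : ℤ, m ≡ n [ZMOD (p : ℤ) ^ 2 * ((p : ℤ) - 1)] →
      F m ≡ F n [ZMOD (p : ℤ) ^ 2] := by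
  have hp5 : 5 ≤ p := by have := hp.two_le; omega
  set N : ℕ := p ^ 2 with hN
  have hpodd : p % 2 = 1 := by omega
  have hNodd : N % 2 = 1 := by rw [hN, Nat.pow_mod, hpodd]
  -- inverse of 2
  set h2 : ZMod N := (((N+1)/2 : ℕ) : ZMod N) with hh2
  have hhalf : (2 : ZMod N) * h2 = 1 := by
    have h' : 2 * ((N+1)/2) = N + 1 := by omega
    calc (2 : ZMod N) * h2 = ((2 * ((N+1)/2) : ℕ) : ZMod N) := by push_cast; ring
    _ = ((N + 1 : ℕ) : ZMod N) := by rw [h']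
    _ = 1 := by push_cast [ZMod.natCast_self]; ring
  set u : ZMod N := (t : ℤ) * h2 with hu
  set v : ZMod N := ((b : ℤ) : ZMod N)^2 * (p : ZMod N) * h2^2 with hv
  have hcast : ((t : ℤ) : ZMod N)^2 + 4 = ((b : ℤ) : ZMod N)^2 * (p : ZMod N) := by
    have := congrArg (fun z : ℤ => (z : ZMod N)) hpt
    push_cast at this ⊢; linear_combination this
  have hu2 : u^2 = v - 1 := by
    rw [hu, hv]; linear_combination h2^2 * hcast - (2*h2 + 1) * hhalf
  have hp0 : (p : ZMod N)^2 = 0 := by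
    have : ((p^2 : ℕ) : ZMod N) = 0 := by rw [← hN]; exact ZMod.natCast_self N
    push_cast at this; exact this
  have hv2 : v^2 = 0 := by
    rw [hv]
    linear_combination (((b : ℤ) : ZMod N)^4 * h2^4) * hp0
  have hpv : (p : ZMod N) * v = 0 := by
    rw [hv]
    linear_combination (((b : ℤ) : ZMod N)^2 * h2^2) * hp0
  have ht2 : ((t : ℤ) : ZMod N) = 2 * u := by
    rw [hu]; linear_combination - (t : ℤ) * hhalf
  -- closed form
  set g : ℕ → ZMod N := fun n => u^(n-1) * ((n : ZMod N) - ((n.choose 3 : ℕ) : ZMod N) * v)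
    with hg
  have hFg : ∀ n : ℕ, ((F n : ℤ) : ZMod N) = g n := by
    have key : ∀ n : ℕ, ((F n : ℤ) : ZMod N) = g n ∧ ((F ((n : ℤ) + 1) : ℤ) : ZMod N) = g (n+1) := by
      intro n
      induction n with
      | zero =>
        constructor
        · norm_num [hg, hF0]
        · norm_num [hg, hF1, Nat.choose]
      | succ n ih =>
        have hn1 : ((n+1 : ℕ) : ℤ) = (n : ℤ) + 1 := by push_cast; ring
        constructor
        · rw [hn1]; exact ih.2
        · rw [hn1, show (n:ℤ)+1+1 = (n:ℤ)+2 by ring, hF n]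
          push_cast
          rw [ih.1, ih.2, ht2]
          -- now prove 2u * g (n+1) + g n = g (n+2)
          rcases n with _ | m
          · norm_num [hg, Nat.choose]; ring
          · have hch : (((m+3).choose 3 : ℕ) : ZMod N) + (((m+1).choose 3 : ℕ) : ZMod N)
                = 2*(((m+2).choose 3 : ℕ) : ZMod N) + ((m : ZMod N) + 1) := by
              have := congrArg (fun k : ℕ => (k : ZMod N)) (choose3_second_diff m)
              push_cast at this; linear_combination this
            show 2 * u * g (m+2) + g (m+1) = g (m+3)
            simp only [hg, Nat.add_sub_cancel]
            push_cast
            linear_combination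
              (- u^m * (((m : ZMod N)+3) - (((m+3).choose 3 : ℕ) : ZMod N)*v
                - 2*(((m : ZMod N)+2) - (((m+2).choose 3 : ℕ) : ZMod N)*v))) * hu2
              + (- u^m * (2*(((m+2).choose 3 : ℕ) : ZMod N)
                - (((m+3).choose 3 : ℕ) : ZMod N))) * hv2
              + (- u^m * v) * hch
    exact fun n => (key n).1
  -- the period
  set P : ℕ := p^2 * (p - 1) with hP
  have hp2dvd : ∀ n : ℕ, p^2 ∣ (n-2) * ((n-1) * n) → (((n.choose 3 : ℕ)) : ZMod N) = 0 := by
    intro n hdvd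
    have c2 : Nat.Coprime p 2 := (Nat.coprime_primes hp Nat.prime_two).mpr (by omega)
    have c3 : Nat.Coprime p 3 := (Nat.coprime_primes hp Nat.prime_three).mpr (by omega)
    have hcop : Nat.Coprime (p^2) 6 := by
      apply Nat.Coprime.pow_left
      rw [show (6:ℕ) = 2*3 from rfl]
      exact Nat.Coprime.mul_right c2 c3
    have : p^2 ∣ 6 * n.choose 3 := by rw [six_choose3]; exact hdvd
    have : p^2 ∣ n.choose 3 := (Nat.Coprime.dvd_of_dvd_mul_left hcop this)
    rw [← hN] at this
    exact (ZMod.natCast_eq_zero_iff _ _).mpr this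
  have hPcast : ((P : ℕ) : ZMod N) = 0 := by
    have : (N : ℕ) ∣ P := ⟨p - 1, rfl⟩
    exact (ZMod.natCast_eq_zero_iff _ _).mpr this
  have hgP : g P = 0 := by
    have h1 : (((P.choose 3 : ℕ)) : ZMod N) = 0 := by
      apply hp2dvd P
      have h : p^2 ∣ P := ⟨p-1, rfl⟩
      exact Dvd.dvd.mul_left (h.mul_left (P-1)) (P-2)
    rw [hg]; simp only [hPcast, h1]; ring
  have hgP1 : g (P+1) = u^P := by
    have h1 : ((((P+1).choose 3 : ℕ)) : ZMod N) = 0 := by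
      apply hp2dvd
      have h : p^2 ∣ P := ⟨p-1, rfl⟩
      rw [Nat.add_sub_cancel]
      exact Dvd.dvd.mul_left (h.mul_right (P+1)) (P+1-2)
    rw [hg]; simp only [Nat.add_sub_cancel, h1]
    push_cast [hPcast]; ring
  -- u ^ P = 1
  have huP : u ^ P = 1 := by
    have hu4 : u^4 = 1 - 2*v := by
      have : u^4 = (u^2)^2 := by ring
      rw [this, hu2]; linear_combination hv2
    have hpow : ∀ n : ℕ, (1 - 2*v)^n = 1 - 2*(n : ZMod N)*v := by
      intro n; induction n with
      | zero => simp
      | succ n ih =>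
        rw [pow_succ, ih]; push_cast
        linear_combination (4*(n : ZMod N)) * hv2
    have hu4p : u^(4*p) = 1 := by
      rw [pow_mul, hu4, hpow]
      linear_combination (-2 : ZMod N) * hpv
    obtain ⟨k, hk⟩ : ∃ k, p - 1 = 4 * k := ⟨(p-1)/4, by omega⟩
    have hPeq : P = (4*p) * (p*k) := by rw [hP, hk]; ring
    rw [hPeq, pow_mul, hu4p, one_pow]
  -- periodicity
  set D : ℤ → Prop := fun k => ((F (k + P) : ℤ) : ZMod N) = ((F k : ℤ) : ZMod N) with hD
  have hDcongr : ∀ a b : ℤ, a = b → D a → D b := fun a b h => h ▸ id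
  have hD0 : D 0 := by
    show ((F (0 + P) : ℤ) : ZMod N) = ((F 0 : ℤ) : ZMod N)
    rw [zero_add, hF0]
    rw [hFg P, hgP]; simp
  have hD1 : D 1 := by
    show ((F (1 + P) : ℤ) : ZMod N) = ((F 1 : ℤ) : ZMod N)
    rw [show (1 + (P : ℤ)) = ((P + 1 : ℕ) : ℤ) by push_cast; ring, hF1]
    rw [hFg (P+1), hgP1, huP]; simp
  have hfwd : ∀ k : ℤ, D k → D (k+1) → D (k+2) := by
    intro k h0 h1
    show ((F ((k+2) + P) : ℤ) : ZMod N) = ((F (k+2) : ℤ) : ZMod N)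
    have e1 : (k+2) + P = (k + P) + 2 := by ring
    rw [e1, hF (k + P), hF k]
    push_cast
    rw [show (k + (P:ℤ) + 1) = (k+1) + P by ring]
    rw [h0, h1]
  have hbwd : ∀ k : ℤ, D (k+1) → D (k+2) → D k := by
    intro k h1 h2
    show ((F (k + P) : ℤ) : ZMod N) = ((F k : ℤ) : ZMod N)
    have e0 : F k = F (k+2) - t * F (k+1) := by rw [hF k]; ring
    have e0' : F (k + P) = F ((k+2) + P) - t * F ((k+1) + P) := by
      rw [show (k+2) + (P:ℤ) = (k + P) + 2 by ring, hF (k + P),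
        show k + (P:ℤ) + 1 = (k+1) + P by ring]; ring
    rw [e0, e0']
    push_cast
    rw [h1, h2]
  have hall : ∀ k : ℤ, D k ∧ D (k+1) := by
    intro k
    induction k using Int.induction_on with
    | zero => exact ⟨hD0, hD1⟩
    | succ i ih => exact ⟨ih.2, hfwd i ih.1 ih.2⟩
    | pred i ih =>
      refine ⟨hbwd (-(i:ℤ) - 1) ?_ ?_, hDcongr _ _ (by ring) ih.1⟩
      · exact hDcongr _ _ (by ring) ih.1
      · exact hDcongr _ _ (by ring) ih.2
  have hper : ∀ k : ℤ, ((F (k + P) : ℤ) : ZMod N) = ((F k : ℤ) : ZMod N) :=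
    fun k => (hall k).1
  have hiter : ∀ (j : ℕ) (k : ℤ), ((F (k + j * P) : ℤ) : ZMod N) = ((F k : ℤ) : ZMod N) := by
    intro j
    induction j with
    | zero => intro k; norm_num
    | succ j ih =>
      intro k
      rw [show k + ((j+1 : ℕ) : ℤ) * P = (k + j * P) + P by push_cast; ring]
      rw [hper (k + j * P), ih k]
  -- conclusion
  intro m n hmn
  have hPZ : ((P : ℕ) : ℤ) = (p : ℤ)^2 * ((p : ℤ) - 1) := by
    rw [hP]; push_cast [Nat.cast_sub (by omega : 1 ≤ p)]; ring
  have hdvd : ((P : ℕ) : ℤ) ∣ n - m := by rw [hPZ]; exact Int.ModEq.dvd hmn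
  obtain ⟨j, hj⟩ := hdvd
  have hcasteq : ((F m : ℤ) : ZMod N) = ((F n : ℤ) : ZMod N) := by
    rcases le_or_gt 0 j with hj0 | hj0
    · obtain ⟨a, ha⟩ : ∃ a : ℕ, j = (a : ℤ) := ⟨j.toNat, (Int.toNat_of_nonneg hj0).symm⟩
      have : n = m + a * P := by rw [ha] at hj; push_cast at hj ⊢; linarith
      rw [this, hiter a m]
    · obtain ⟨a, ha⟩ : ∃ a : ℕ, -j = (a : ℤ) :=
        ⟨(-j).toNat, (Int.toNat_of_nonneg (by omega)).symm⟩
      have : m = n + a * P := by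
        have : -j = (a : ℤ) := ha
        push_cast at this ⊢; nlinarith [hj]
      rw [this, hiter a n]
  have := (ZMod.intCast_eq_intCast_iff _ _ N).mp hcasteq
  rw [hN] at this
  have hNZ : ((p^2 : ℕ) : ℤ) = (p : ℤ)^2 := by push_cast; ring
  rwa [hNZ] at this
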